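/- arXiv:1402.1429 — 2 statements merged into one kernel-verified Lean document; each statement's English description precedes it below -/
import Mathlib

section
/- A completely positive map Ψ(X) = Σ_{i=1}^m V_i X V_i* on n×n Hermitian matrices is strictly positive (maps every nonzero positive semidefinite matrix to a positive definite matrix) if and only if there do not exist nonzero vectors x, y ∈ ℂ^n such that x* V_i y = 0 for all i = 1,...,m. -/
open Matrix ComplexOrder

lemma aux_sum_mulVec {ι : Type*} {n : ℕ} (s : Finset ι) (A : ι → Matrix (Fin n) (Fin n) ℂ)
    (x : Fin n → ℂ) : (∑ i ∈ s, A i) *ᵥ x = ∑ i ∈ s, A i *ᵥ x := by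
  ext j
  simp only [Matrix.mulVec, dotProduct, Finset.sum_apply, Matrix.sum_apply, Finset.sum_mul]
  rw [Finset.sum_comm]

lemma aux_dotProduct_sum {ι : Type*} {n : ℕ} (s : Finset ι) (v : Fin n → ℂ)
    (w : ι → Fin n → ℂ) : v ⬝ᵥ (∑ i ∈ s, w i) = ∑ i ∈ s, v ⬝ᵥ w i := by
  simp only [dotProduct, Finset.sum_apply, Finset.mul_sum]
  rw [Finset.sum_comm]

lemma aux_star_vecMul {n : ℕ} (A : Matrix (Fin n) (Fin n) ℂ) (x : Fin n → ℂ) :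
    star x ᵥ* A = star (Aᴴ *ᵥ x) := by
  rw [Matrix.star_mulVec, Matrix.conjTranspose_conjTranspose]

lemma aux_mulVec (y x : Fin n → ℂ) :
    (Matrix.vecMulVec y (star y)) *ᵥ x = fun i => y i * (star y ⬝ᵥ x) := by
  ext i
  simp [Matrix.mulVec, Matrix.vecMulVec_apply, dotProduct, Finset.mul_sum, mul_assoc]

lemma aux_quad (y x : Fin n → ℂ) :
    star x ⬝ᵥ (Matrix.vecMulVec y (star y)) *ᵥ x
      = star (star y ⬝ᵥ x) * (star y ⬝ᵥ x) := by
  rw [aux_mulVec]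
  have h2 : star x ⬝ᵥ y = star (star y ⬝ᵥ x) := by
    simp [dotProduct, mul_comm]
  rw [← h2]
  simp only [dotProduct, Finset.sum_mul]
  exact Finset.sum_congr rfl fun i _ => by ring

lemma aux_psd (y : Fin n → ℂ) : (Matrix.vecMulVec y (star y)).PosSemidef := by
  refine Matrix.PosSemidef.of_dotProduct_mulVec_nonneg ?_ ?_
  · ext i j
    simp [Matrix.conjTranspose_apply, Matrix.vecMulVec_apply, mul_comm]
  · intro x
    rw [aux_quad]
    exact star_mul_self_nonneg _

theorem stmt2 (n m : ℕ) (V : Fin m → Matrix (Fin n) (Fin n) ℂ) :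
    (∀ X : Matrix (Fin n) (Fin n) ℂ, X.PosSemidef → X ≠ 0 →
        (∑ i, V i * X * (V i)ᴴ).PosDef) ↔
      ¬ ∃ x y : Fin n → ℂ, x ≠ 0 ∧ y ≠ 0 ∧ ∀ i, star x ⬝ᵥ (V i *ᵥ y) = 0 := by
  constructor
  · rintro h ⟨x, y, hx, hy, hxy⟩
    set X := Matrix.vecMulVec y (star y) with hXdef
    have hX0 : X ≠ 0 := by
      intro h0
      obtain ⟨i, hi⟩ := Function.ne_iff.mp hy
      have hXii : X i i = 0 := by rw [h0]; rfl
      rw [hXdef, Matrix.vecMulVec_apply] at hXii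
      apply hi
      have : star (y i) * y i = 0 := by rw [mul_comm]; exact hXii
      exact (CStarRing.star_mul_self_eq_zero_iff (y i)).mp this
    have hPD := h X (aux_psd y) hX0
    have hpos := hPD.dotProduct_mulVec_pos hx
    have hzero : star x ⬝ᵥ (∑ i, V i * X * (V i)ᴴ) *ᵥ x = 0 := by
      rw [aux_sum_mulVec, aux_dotProduct_sum]
      refine Finset.sum_eq_zero fun i _ => ?_
      have e1 : (V i * X * (V i)ᴴ) *ᵥ x = V i *ᵥ (X *ᵥ ((V i)ᴴ *ᵥ x)) := by
        rw [← Matrix.mulVec_mulVec, ← Matrix.mulVec_mulVec]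
      rw [e1, Matrix.dotProduct_mulVec, aux_star_vecMul, aux_quad]
      have h2 : star y ⬝ᵥ ((V i)ᴴ *ᵥ x) = star (star x ⬝ᵥ V i *ᵥ y) := by
        rw [Matrix.dotProduct_mulVec, aux_star_vecMul, Matrix.conjTranspose_conjTranspose]
        simp [dotProduct, mul_comm]
      rw [h2, hxy i]
      simp
    rw [hzero] at hpos
    exact lt_irrefl _ hpos
  · intro h X hX hX0
    refine Matrix.PosDef.of_dotProduct_mulVec_pos ?_ ?_
    · show (∑ i, V i * X * (V i)ᴴ)ᴴ = _
      rw [Matrix.conjTranspose_sum]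
      refine Finset.sum_congr rfl fun i _ => ?_
      simp only [Matrix.conjTranspose_mul, Matrix.conjTranspose_conjTranspose]
      rw [Matrix.mul_assoc, ← Matrix.mul_assoc (V i), hX.1.eq, Matrix.mul_assoc]
    · intro x hx
      have hterm : ∀ i, 0 ≤ star x ⬝ᵥ (V i * X * (V i)ᴴ) *ᵥ x := by
        intro i
        have e1 : (V i * X * (V i)ᴴ) *ᵥ x = V i *ᵥ (X *ᵥ ((V i)ᴴ *ᵥ x)) := by
          rw [← Matrix.mulVec_mulVec, ← Matrix.mulVec_mulVec]
        rw [e1, Matrix.dotProduct_mulVec, aux_star_vecMul]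
        exact hX.dotProduct_mulVec_nonneg _
      have hsum : 0 ≤ star x ⬝ᵥ (∑ i, V i * X * (V i)ᴴ) *ᵥ x := by
        rw [aux_sum_mulVec, aux_dotProduct_sum]
        exact Finset.sum_nonneg fun i _ => hterm i
      rcases hsum.lt_or_eq with hlt | heq
      · exact hlt
      exfalso
      have hall : ∀ i, star x ⬝ᵥ (V i * X * (V i)ᴴ) *ᵥ x = 0 := by
        have h0 := heq.symm
        rw [aux_sum_mulVec, aux_dotProduct_sum] at h0
        intro i
        exact (Finset.sum_eq_zero_iff_of_nonneg (fun i _ => hterm i)).mp h0 i (by simp)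
      have hker : ∀ i, X *ᵥ ((V i)ᴴ *ᵥ x) = 0 := by
        intro i
        have h1 := hall i
        have e1 : (V i * X * (V i)ᴴ) *ᵥ x = V i *ᵥ (X *ᵥ ((V i)ᴴ *ᵥ x)) := by
          rw [← Matrix.mulVec_mulVec, ← Matrix.mulVec_mulVec]
        rw [e1, Matrix.dotProduct_mulVec, aux_star_vecMul] at h1
        exact (hX.dotProduct_mulVec_zero_iff _).mp h1
      have hz : ∃ z, X *ᵥ z ≠ 0 := by
        by_contra hc
        push_neg at hc
        apply hX0
        ext i j
        have := congrFun (hc (Pi.single j 1)) i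
        simpa [Matrix.mulVec_single] using this
      obtain ⟨z, hz⟩ := hz
      apply h
      refine ⟨x, X *ᵥ z, hx, hz, fun i => ?_⟩
      rw [Matrix.mulVec_mulVec, Matrix.dotProduct_mulVec, aux_star_vecMul]
      have e2 : (V i * X)ᴴ *ᵥ x = 0 := by
        rw [Matrix.conjTranspose_mul, ← Matrix.mulVec_mulVec, hX.1.eq, hker i]
      rw [e2]
      simp
end

section
/- The homogeneous system (a-e10) has a nonzero solution pair (x, y) ∈ ℂ^{N+2M+1} × ℂ^{N+2M+1} only if x_0 y_0 ≠ 0. Precisely: suppose nonzero x, y satisfy (i) x_i y_j = x_j y_i for all 0 ≤ i < j ≤ N+2M, (ii) x_i y_i = x_0 y_0 for i = 1,...,N+M, and (iii) (x_0 + r_i x_{k_i^3} − x_{N+M+i}) y_j = 0 for all i = 1,...,M and all j. Then x_0 ≠ 0 and y_0 ≠ 0. -/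
set_option maxHeartbeats 2000000 in
theorem stmt14 (N M : ℕ) (hN : 0 < N) (hM : 0 < M)
    (k3 : Fin M → Fin N) (r : Fin M → ℂ) (hr : ∀ i, r i = 1 ∨ r i = -1)
    (x y : Fin (N + 2 * M + 1) → ℂ) (hx : x ≠ 0) (hy : y ≠ 0)
    (h1 : ∀ i j : Fin (N + 2 * M + 1), i < j → x i * y j = x j * y i)
    (h2 : ∀ i : Fin (N + M),
      x ⟨i.1 + 1, by have := i.isLt; omega⟩ * y ⟨i.1 + 1, by have := i.isLt; omega⟩ =
        x 0 * y 0)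
    (h3 : ∀ i : Fin M, ∀ j : Fin (N + 2 * M + 1),
      (x 0 + r i * x ⟨(k3 i).1 + 1, by have := (k3 i).isLt; omega⟩ -
          x ⟨N + M + i.1 + 1, by have := i.isLt; omega⟩) * y j = 0) :
    x 0 ≠ 0 ∧ y 0 ≠ 0 := by
  have hsym : ∀ i j : Fin (N + 2 * M + 1), x i * y j = x j * y i := by
    intro i j
    rcases lt_trichotomy i j with h | h | h
    · exact h1 i j h
    · rw [h]
    · exact (h1 j i h).symm
  obtain ⟨p, hp⟩ := Function.ne_iff.mp hx
  obtain ⟨q, hq⟩ := Function.ne_iff.mp hy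
  simp only [Pi.zero_apply] at hp hq
  have hxy0 : x 0 = 0 ↔ y 0 = 0 := by
    constructor
    · intro hx0
      by_contra hy0
      apply hx
      funext j
      have h := hsym 0 j
      rw [hx0, zero_mul] at h
      have := (mul_eq_zero.mp h.symm).resolve_right hy0
      simpa using this
    · intro hy0
      by_contra hx0
      apply hy
      funext j
      have h := hsym j 0
      rw [hy0, mul_zero] at h
      have := (mul_eq_zero.mp h.symm).resolve_left hx0
      simpa using this
  suffices hx0 : x 0 ≠ 0 by
    exact ⟨hx0, fun h => hx0 (hxy0.mpr h)⟩
  intro hx0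
  have hy0 : y 0 = 0 := hxy0.mp hx0
  have key : ∀ i : Fin (N + 2 * M + 1), x i * y i = 0 := by
    intro i
    have him := i.isLt
    rcases Nat.lt_or_ge i.1 (N + M + 1) with hi | hi
    · rcases Nat.eq_zero_or_pos i.1 with h | h
      · have : i = 0 := Fin.ext h
        rw [this, hx0, zero_mul]
      · have h' := h2 ⟨i.1 - 1, by omega⟩
        rw [hx0, zero_mul] at h'
        have hidx : (⟨(⟨i.1 - 1, by omega⟩ : Fin (N + M)).1 + 1, by omega⟩ :
            Fin (N + 2 * M + 1)) = i := Fin.ext (show i.1 - 1 + 1 = i.1 by omega)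
        rwa [hidx] at h'
    · obtain ⟨mv, hmv⟩ : ∃ mv : Fin M, i.1 = N + M + mv.1 + 1 :=
        ⟨⟨i.1 - (N + M + 1), by omega⟩, show i.1 = N + M + (i.1 - (N + M + 1)) + 1 by omega⟩
      have h3' := h3 mv q
      have hfac := (mul_eq_zero.mp h3').resolve_right hq
      have hidx : (⟨N + M + mv.1 + 1, by have := mv.isLt; omega⟩ :
          Fin (N + 2 * M + 1)) = i := Fin.ext (show N + M + mv.1 + 1 = i.1 by omega)
      rw [hx0, zero_add, hidx, sub_eq_zero] at hfac
      -- hfac : r mv * x K = x i, where K is the index of k3 mv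
      have hk : x ⟨(k3 mv).1 + 1, by have := (k3 mv).isLt; omega⟩ *
          y ⟨(k3 mv).1 + 1, by have := (k3 mv).isLt; omega⟩ = 0 := by
        have h' := h2 ⟨(k3 mv).1, by have := (k3 mv).isLt; omega⟩
        linear_combination h' + y 0 * hx0
      have hfac' : r mv * x ⟨(k3 mv).1 + 1, by have := (k3 mv).isLt; omega⟩ = x i :=
        hfac
      have hki : x ⟨(k3 mv).1 + 1, by have := (k3 mv).isLt; omega⟩ * y i =
          x i * y ⟨(k3 mv).1 + 1, by have := (k3 mv).isLt; omega⟩ := hsym _ i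
      linear_combination (-(y i) - r mv * y ⟨(k3 mv).1 + 1, by
        have := (k3 mv).isLt; omega⟩) * hfac' + r mv * hki + (r mv) ^ 2 * hk
  have e2 : (x p * y q) * (x p * y q) = (x p * y p) * (x q * y q) := by
    linear_combination (x p * y q) * hsym p q
  rw [key p, key q, zero_mul] at e2
  rcases mul_eq_zero.mp (mul_self_eq_zero.mp e2) with h | h
  · exact hp h
  · exact hq h
end
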